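/- There exists a graphing G (every component a (2r−1)-regular tree, r ≥ 3) and a Borel partition of its edge set into sets U and W such that ρ(U) + ρ(W) ≥ 2 − 2/r > 1 = ρ(U∪W); hence the normalized rank ρ of a graphing need not be additive, and hyperfiniteness cannot be dropped in the forest lemma. -/

import Mathlib

open MeasureTheory

/-- A graphing: a bounded-degree Borel graph `(J, E)` on a standard Borel space together
with a probability measure `μ` satisfying the measure-preservation (intrinsic
mass-transport) equation `∫_A deg_B = ∫_B deg_A`. -/
structure Graphing (J : Type*) [MeasurableSpace J] where
  /-- the (symmetric) adjacency relation -/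
  E : J → J → Prop
  symm : ∀ x y, E x y → E y x
  measE : MeasurableSet {p : J × J | E p.1 p.2}
  /-- the underlying probability measure -/
  μ : Measure J
  prob : IsProbabilityMeasure μ
  /-- the degree bound -/
  D : ℕ
  degFin : ∀ x, {y | E x y}.Finite
  degBound : ∀ x, ({y | E x y}).ncard ≤ D
  mp : ∀ A B : Set J, MeasurableSet A → MeasurableSet B →
    ∫ x in A, (({y ∈ B | E x y}).ncard : ℝ) ∂μ = ∫ x in B, (({y ∈ A | E x y}).ncard : ℝ) ∂μ

namespace Graphing

variable {J : Type*} [MeasurableSpace J]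

/-- The edge set of a graphing, as a (symmetric) set of ordered pairs. -/
def edgeSet (G : Graphing J) : Set (J × J) := {p | G.E p.1 p.2}

/-- A Borel symmetric subset of the edge set of `G`. -/
def IsEdgeSubset (G : Graphing J) (X : Set (J × J)) : Prop :=
  MeasurableSet X ∧ (∀ x y, (x, y) ∈ X → (y, x) ∈ X) ∧ X ⊆ G.edgeSet

/-- The vertex set of the connected component of `x` in the graph with edge set `X`. -/
def compo (X : Set (J × J)) (x : J) : Set J :=
  {y | Relation.ReflTransGen (fun a b => (a, b) ∈ X) x y}

/-- The number of edges of `X` incident with `x`. -/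
noncomputable def degX (X : Set (J × J)) (x : J) : ℕ := ({y | (x, y) ∈ X}).ncard

/-- The average degree `d̄` of a graphing. -/
noncomputable def avgDeg (G : Graphing J) : ℝ := ∫ x, (({y | G.E x y}).ncard : ℝ) ∂G.μ

/-- The edge measure `η` of a graphing: `η(X) = (1/d̄) ∫ deg_X dμ`. -/
noncomputable def eta (G : Graphing J) (X : Set (J × J)) : ℝ :=
  (∫ x, (degX X x : ℝ) ∂G.μ) / G.avgDeg

/-- The normalized rank `ρ(X) = 1 − E_u(1/|V(G^X_u)|)` of a Borel edge set `X`, with the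
convention `1/|V| = 0` for infinite components (`Nat.card` of an infinite set is `0`). -/
noncomputable def rho (G : Graphing J) (X : Set (J × J)) : ℝ :=
  1 - ∫ x, (1 : ℝ) / (Nat.card ↥(compo X x)) ∂G.μ

/-- A graphing is hyperfinite if edge sets of arbitrarily small edge measure can be
removed so that only finite connected components remain. -/
def Hyperfinite (G : Graphing J) : Prop :=
  ∀ ε : ℝ, 0 < ε → ∃ X : Set (J × J), G.IsEdgeSubset X ∧ G.eta X < ε ∧
    ∀ x : J, (compo (G.edgeSet \ X) x).Finite

/-- A set of edges is a forest if for every edge `(a,b)` there is no path from `a` to `b`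
avoiding that edge; equivalently, the graph it spans has no cycles. -/
def IsForestSet (X : Set (J × J)) : Prop :=
  ∀ a b : J, (a, b) ∈ X →
    ¬ Relation.ReflTransGen
        (fun u v => (u, v) ∈ X ∧ ¬((u = a ∧ v = b) ∨ (u = b ∧ v = a))) a b

/-- A graphing is a forest (all components are trees) if its edge set is a forest. -/
def IsForest (G : Graphing J) : Prop := IsForestSet G.edgeSet

end Graphing

open Monoid
open scoped ENNReal

namespace RhoNA

abbrev Gam (D : ℕ) := Monoid.CoprodI (fun _ : Fin D => Multiplicative (ZMod 2))

instance (D : ℕ) : Countable (Gam D) := by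
  have h : Function.Injective
      (Monoid.CoprodI.Word.toList (M := fun _ : Fin D => Multiplicative (ZMod 2))) :=
    fun _ _ => Monoid.CoprodI.Word.ext
  have : Countable (Monoid.CoprodI.Word (fun _ : Fin D => Multiplicative (ZMod 2))) :=
    h.countable
  exact (Monoid.CoprodI.Word.equiv).injective.countable

def gg : Multiplicative (ZMod 2) := Multiplicative.ofAdd 1

lemma gg_ne_one : gg ≠ 1 := by decide

lemma gg_sq : gg * gg = 1 := by decide

variable {D : ℕ}

/-- the standard involutive generators -/
def a (i : Fin D) : Gam D := Monoid.CoprodI.of (M := fun _ : Fin D => Multiplicative (ZMod 2)) (i := i) gg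

lemma a_sq (i : Fin D) : a i * a i = 1 := by
  rw [a, ← MonoidHom.map_mul, gg_sq, MonoidHom.map_one]

lemma a_inv (i : Fin D) : (a i)⁻¹ = a i :=
  inv_eq_of_mul_eq_one_right (a_sq i)

/-- the product of generators along a list of indices -/
def pr (l : List (Fin D)) : Gam D := (l.map a).prod

lemma pr_nil : pr ([] : List (Fin D)) = 1 := rfl
lemma pr_cons (i : Fin D) (l : List (Fin D)) : pr (i :: l) = a i * pr l := by
  simp [pr]

/-- the reduced word attached to a list with no two adjacent entries equal -/
def wordOf (l : List (Fin D)) (hl : l.Chain' (· ≠ ·)) :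
    Monoid.CoprodI.Word (fun _ : Fin D => Multiplicative (ZMod 2)) where
  toList := l.map (fun i => ⟨i, gg⟩)
  ne_one := by
    intro p hp
    rcases List.mem_map.1 hp with ⟨i, _, rfl⟩
    exact gg_ne_one
  chain_ne := by
    refine List.isChain_map_of_isChain _ ?_ hl
    intro i j hij
    exact hij

lemma wordOf_prod (l : List (Fin D)) (hl : l.Chain' (· ≠ ·)) :
    (wordOf l hl).prod = pr l := by
  simp only [Monoid.CoprodI.Word.prod, wordOf, pr, List.map_map]
  rfl

/-- uniqueness of reduced words -/
lemma pr_injOn {l l' : List (Fin D)} (hl : l.Chain' (· ≠ ·)) (hl' : l'.Chain' (· ≠ ·))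
    (h : pr l = pr l') : l = l' := by
  have hw : wordOf l hl = wordOf l' hl' := by
    have hinj : Function.Injective
        (Monoid.CoprodI.Word.prod (M := fun _ : Fin D => Multiplicative (ZMod 2))) := by
      intro w w' hww
      exact (Monoid.CoprodI.Word.equiv
        (M := fun _ : Fin D => Multiplicative (ZMod 2))).right_inv.injective hww
    exact hinj (by rw [wordOf_prod, wordOf_prod, h])
  have := congrArg Monoid.CoprodI.Word.toList hw
  simpa only [wordOf, List.map_inj_left] using
    List.map_injective_iff.2 (fun i j hij => congrArg Sigma.fst hij) this

lemma pr_eq_one {l : List (Fin D)} (hl : l.Chain' (· ≠ ·)) (h : pr l = 1) : l = [] :=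
  pr_injOn hl List.isChain_nil (by simpa [pr] using h)

lemma pr_eq_a {l : List (Fin D)} {i : Fin D} (hl : l.Chain' (· ≠ ·)) (h : pr l = a i) :
    l = [i] := by
  refine pr_injOn hl (List.isChain_singleton i) ?_
  simpa [pr] using h

lemma a_injective : Function.Injective (a : Fin D → Gam D) := by
  intro i j h
  have : pr [i] = pr [j] := by simp [pr, h]
  have := pr_injOn (List.isChain_singleton i) (List.isChain_singleton j) this
  simpa using this

lemma a_ne_one (i : Fin D) : a i ≠ 1 := by
  intro h
  have := pr_eq_one (l := [i]) (List.isChain_singleton i) (by simpa [pr] using h)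
  simp at this

lemma mul_a_eq_one {i j : Fin D} (h : a i * a j = 1) : i = j := by
  by_contra hne
  have hc : ([i, j] : List (Fin D)).Chain' (· ≠ ·) := by
    simp [List.Chain', List.isChain_cons_cons, hne]
  have := pr_eq_one hc (by simpa [pr, mul_assoc] using h)
  simp at this


/-- alternating lists -/
def altl (i j : Fin D) : ℕ → List (Fin D)
  | 0 => []
  | n + 1 => (if Even n then i else j) :: altl i j n

lemma altl_length (i j : Fin D) (n : ℕ) : (altl i j n).length = n := by
  induction n with
  | zero => rfl
  | succ n ih => simp [altl, ih]

lemma altl_chain {i j : Fin D} (hij : i ≠ j) (n : ℕ) : (altl i j n).Chain' (· ≠ ·) := by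
  induction n with
  | zero => exact List.isChain_nil
  | succ n ih =>
    rw [altl, List.Chain', List.isChain_cons]
    refine ⟨?_, ih⟩
    intro y hy
    match n, hy with
    | (m + 1), hy =>
      rw [altl] at hy
      simp only [List.head?_cons, Option.mem_def, Option.some.injEq] at hy
      subst hy
      rcases Nat.even_or_odd m with hm | hm
      · simp [hm, Nat.even_add_one, hij, hij.symm]
      · simp [Nat.even_add_one, Nat.not_even_iff_odd.2 hm, hij, hij.symm]

lemma altl_injective {i j : Fin D} (hij : i ≠ j) :
    Function.Injective (fun n => pr (altl i j n)) := by
  intro n m h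
  have := pr_injOn (altl_chain hij n) (altl_chain hij m) h
  have := congrArg List.length this
  simpa [altl_length] using this

lemma infinite_gam (hD : 2 ≤ D) : Infinite (Gam D) := by
  have h01 : (⟨0, by omega⟩ : Fin D) ≠ ⟨1, by omega⟩ := by
    intro h; simpa using congrArg Fin.val h
  exact Infinite.of_injective _ (altl_injective h01)


/-! ### The Bernoulli-type space with Haar measure -/

abbrev Om (D : ℕ) := Gam D → ZMod 2

noncomputable def mu0 (D : ℕ) : Measure (Om D) :=
  Measure.addHaarMeasure (⊤ : TopologicalSpace.PositiveCompacts (Om D))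

instance (D : ℕ) : IsProbabilityMeasure (mu0 D) := by
  constructor
  have := Measure.addHaarMeasure_self
    (K₀ := (⊤ : TopologicalSpace.PositiveCompacts (Om D)))
  simpa [mu0] using this

instance (D : ℕ) : (mu0 D).IsAddLeftInvariant := by
  unfold mu0; infer_instance

instance (D : ℕ) : SigmaFinite (mu0 D) := inferInstance

/-- the shift action -/
def T (γ : Gam D) (ω : Om D) : Om D := fun g => ω (γ⁻¹ * g)

lemma T_one (ω : Om D) : T 1 ω = ω := by
  funext g; simp [T]

lemma T_comp (γ δ : Gam D) (ω : Om D) : T γ (T δ ω) = T (γ * δ) ω := by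
  funext g; simp [T, mul_assoc]

lemma T_add (γ : Gam D) (ω ω' : Om D) : T γ (ω + ω') = T γ ω + T γ ω' := by
  funext g; simp [T]

lemma T_cancel {γ : Gam D} {ω ω' : Om D} (h : T γ ω = T γ ω') : ω = ω' := by
  have := congrArg (T γ⁻¹) h
  rwa [T_comp, T_comp, inv_mul_cancel, T_one, T_one] at this

lemma measurable_T (γ : Gam D) : Measurable (T (D := D) γ) := by
  refine measurable_pi_iff.2 fun g => ?_
  exact measurable_pi_apply _

lemma measurePreserving_T (γ : Gam D) : MeasurePreserving (T γ) (mu0 D) (mu0 D) := by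
  refine ⟨measurable_T γ, ?_⟩
  set ν : Measure (Om D) := Measure.map (T γ) (mu0 D) with hν
  haveI : IsProbabilityMeasure ν := Measure.isProbabilityMeasure_map (measurable_T γ).aemeasurable
  haveI : ν.IsAddLeftInvariant := by
    constructor
    intro c
    rw [hν, Measure.map_map (measurable_const_add c) (measurable_T γ)]
    have hfun : ((c + ·) ∘ T γ) = (T γ) ∘ ((T γ⁻¹ c) + ·) := by
      funext ω
      simp only [Function.comp_apply]
      rw [T_add, T_comp, mul_inv_cancel, T_one]
    rw [hfun, ← Measure.map_map (measurable_T γ) (measurable_const_add _),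
      map_add_left_eq_self (mu0 D) _]
  haveI : SigmaFinite ν := inferInstance
  have h1 := Measure.addHaarMeasure_unique ν
    (⊤ : TopologicalSpace.PositiveCompacts (Om D))
  have h2 : ν (⊤ : TopologicalSpace.PositiveCompacts (Om D)) = 1 := by
    have : ((⊤ : TopologicalSpace.PositiveCompacts (Om D)) : Set (Om D)) = Set.univ := rfl
    rw [this, measure_univ]
  rw [hν] at h1 h2 ⊢
  rw [h1, h2, one_smul, mu0]

/-! ### The set of fixed points of a nontrivial shift is null -/

def Sfix (γ : Gam D) : Set (Om D) := {ω | T γ ω = ω}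

lemma measurableSet_Sfix (γ : Gam D) : MeasurableSet (Sfix (D := D) γ) := by
  have : Sfix (D := D) γ = ⋂ g : Gam D, {ω : Om D | ω (γ⁻¹ * g) = ω g} := by
    ext ω
    simp only [Sfix, Set.mem_setOf_eq, Set.mem_iInter, funext_iff]
    rfl
  rw [this]
  exact MeasurableSet.iInter fun g =>
    measurableSet_eq_fun (measurable_pi_apply _) (measurable_pi_apply _)

lemma exists_marks (hD : 2 ≤ D) {γ : Gam D} (hγ : γ ≠ 1) (n : ℕ) :
    ∃ g : Fin n → Gam D, Function.Injective g ∧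
      ∀ k k' : Fin n, g k ≠ γ⁻¹ * g k' := by
  haveI : Infinite (Gam D) := infinite_gam hD
  induction n with
  | zero => exact ⟨fun k => 1, fun k => k.elim0, fun k => k.elim0⟩
  | succ n ih =>
    obtain ⟨g, hginj, hg⟩ := ih
    obtain ⟨x, hx⟩ := Infinite.exists_notMem_finset
      ((Finset.univ.image g) ∪ (Finset.univ.image (fun k => γ⁻¹ * g k))
        ∪ (Finset.univ.image (fun k => γ * g k)))
    simp only [Finset.mem_union, Finset.mem_image, Finset.mem_univ, true_and, not_or,
      not_exists] at hx
    obtain ⟨⟨hx1, hx2⟩, hx3⟩ := hx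
    refine ⟨Fin.cons x g, ?_, ?_⟩
    · refine (Fin.cons_injective_iff).2 ⟨?_, hginj⟩
      rintro ⟨k, hk⟩
      exact hx1 k hk
    · intro k k'
      refine Fin.cases ?_ (fun k1 => ?_) k <;> refine Fin.cases ?_ (fun k2 => ?_) k'
      · -- x ≠ γ⁻¹ * x
        simp only [Fin.cons_zero]
        intro h
        apply hγ
        have h2 : γ⁻¹ * x = 1 * x := by rw [one_mul, ← h]
        have h3 : γ⁻¹ = 1 := mul_right_cancel h2
        exact inv_eq_one.mp h3
      · simp only [Fin.cons_zero, Fin.cons_succ]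
        exact fun h => hx2 k2 h.symm
      · simp only [Fin.cons_zero, Fin.cons_succ]
        intro h
        exact hx3 k1 (by rw [h, ← mul_assoc, mul_inv_cancel, one_mul])
      · simp only [Fin.cons_succ]
        exact hg k1 k2

lemma mu0_Sfix_le (hD : 2 ≤ D) {γ : Gam D} (hγ : γ ≠ 1) (n : ℕ) :
    mu0 D (Sfix γ) ≤ ((2 : ℝ≥0∞) ^ n)⁻¹ := by
  obtain ⟨g, hginj, hg⟩ := exists_marks hD hγ n
  set Φ : Om D → (Fin n → ZMod 2) := fun ω k => ω (g k) - ω (γ⁻¹ * g k) with hΦ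
  have hΦm : Measurable Φ := by
    refine measurable_pi_iff.2 fun k => ?_
    have h1 : Measurable (fun ω : Om D => (ω (g k), ω (γ⁻¹ * g k))) :=
      (measurable_pi_apply (g k)).prodMk (measurable_pi_apply (γ⁻¹ * g k))
    exact (measurable_of_countable (fun p : ZMod 2 × ZMod 2 => p.1 - p.2)).comp h1
  -- all fibers have the same measure
  have hfiber : ∀ v : Fin n → ZMod 2, mu0 D (Φ ⁻¹' {v}) = mu0 D (Φ ⁻¹' {0}) := by
    intro v
    set c : Om D := fun x => ∑ k ∈ Finset.univ.filter (fun k => g k = x), v k with hc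
    have hcg : ∀ k, c (g k) = v k := by
      intro k
      rw [hc]
      have : Finset.univ.filter (fun k' => g k' = g k) = {k} := by
        ext k'; simp [hginj.eq_iff]
      simp [this]
    have hch : ∀ k, c (γ⁻¹ * g k) = 0 := by
      intro k
      rw [hc]
      have : Finset.univ.filter (fun k' => g k' = γ⁻¹ * g k) = ∅ := by
        ext k'; simpa using hg k' k
      simp [this]
    have hkey : ∀ ω, Φ (c + ω) = v + Φ ω := by
      intro ω
      funext k
      simp only [hΦ, Pi.add_apply, hcg, hch]
      ring
    have key : (c + ·) ⁻¹' (Φ ⁻¹' {v}) = Φ ⁻¹' {0} := by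
      ext ω
      simp only [Set.mem_preimage, Set.mem_singleton_iff, hkey]
      constructor
      · intro h
        have : v + Φ ω = v + 0 := by rw [h, add_zero]
        exact add_left_cancel this
      · intro h
        rw [h, add_zero]
    calc mu0 D (Φ ⁻¹' {v})
        = (Measure.map (c + ·) (mu0 D)) (Φ ⁻¹' {v}) := by
          rw [map_add_left_eq_self (mu0 D) c]
      _ = mu0 D ((c + ·) ⁻¹' (Φ ⁻¹' {v})) := by
          rw [Measure.map_apply (measurable_const_add c) (hΦm (measurableSet_singleton v))]
      _ = mu0 D (Φ ⁻¹' {0}) := by rw [key]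
  have hsum : ∑ v : Fin n → ZMod 2, mu0 D (Φ ⁻¹' {v}) = 1 := by
    rw [MeasureTheory.sum_measure_preimage_singleton _
      (fun v _ => hΦm (measurableSet_singleton v))]
    have : (Φ ⁻¹' ↑(Finset.univ : Finset (Fin n → ZMod 2))) = Set.univ := by
      simp
    rw [this, measure_univ]
  have hcard : ∑ v : Fin n → ZMod 2, mu0 D (Φ ⁻¹' {v})
      = (Fintype.card (Fin n → ZMod 2) : ℝ≥0∞) * mu0 D (Φ ⁻¹' {0}) := by
    rw [Finset.sum_congr rfl (fun v _ => hfiber v)]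
    simp [Finset.sum_const, nsmul_eq_mul, Finset.card_univ]
  have hc2 : (Fintype.card (Fin n → ZMod 2) : ℝ≥0∞) = 2 ^ n := by
    rw [Fintype.card_fun]
    simp
  have hval : mu0 D (Φ ⁻¹' {0}) = ((2:ℝ≥0∞) ^ n)⁻¹ := by
    have h2 : ((2:ℝ≥0∞) ^ n) * mu0 D (Φ ⁻¹' {0}) = 1 := by
      rw [← hc2, ← hcard, hsum]
    exact ENNReal.eq_inv_of_mul_eq_one_left (by rw [mul_comm]; exact h2)
  have hsub : Sfix γ ⊆ Φ ⁻¹' {0} := by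
    intro ω hω
    have h1 : ∀ g', ω (γ⁻¹ * g') = ω g' := fun g' => congrFun hω g'
    simp only [Set.mem_preimage, Set.mem_singleton_iff]
    funext k
    simp [hΦ, h1]
  exact le_trans (measure_mono hsub) (le_of_eq hval)

lemma mu0_Sfix (hD : 2 ≤ D) {γ : Gam D} (hγ : γ ≠ 1) : mu0 D (Sfix γ) = 0 := by
  by_contra h
  obtain ⟨n, hn⟩ := ENNReal.exists_inv_two_pow_lt h
  have := mu0_Sfix_le hD hγ n
  rw [ENNReal.inv_pow] at this
  exact absurd (lt_of_le_of_lt this hn) (lt_irrefl _)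

/-- the set of points where the action is free -/
def Fset (D : ℕ) : Set (Om D) := {ω | ∀ γ : Gam D, γ ≠ 1 → T γ ω ≠ ω}

lemma measurableSet_Fset (D : ℕ) : MeasurableSet (Fset D) := by
  have : Fset D = ⋂ (γ : Gam D) (_ : γ ≠ 1), (Sfix γ)ᶜ := by
    ext ω
    simp [Fset, Sfix]
  rw [this]
  exact MeasurableSet.iInter fun γ =>
    MeasurableSet.iInter fun _ => (measurableSet_Sfix γ).compl

lemma mu0_Fset (hD : 2 ≤ D) : mu0 D (Fset D) = 1 := by
  have hc : mu0 D (Fset D)ᶜ = 0 := by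
    have : (Fset D)ᶜ = ⋃ (γ : Gam D) (_ : γ ≠ 1), Sfix γ := by
      ext ω
      simp [Fset, Sfix]
    rw [this]
    refine measure_iUnion_null fun γ => ?_
    by_cases hγ : γ = 1
    · simp [hγ]
    · simpa [hγ] using mu0_Sfix hD hγ
  have := measure_add_measure_compl (μ := mu0 D) (measurableSet_Fset D)
  rw [hc, add_zero] at this
  rw [this, measure_univ]

lemma T_mem_Fset {δ : Gam D} {ω : Om D} (hω : ω ∈ Fset D) : T δ ω ∈ Fset D := by
  intro γ hγ h
  have h2 : T (δ⁻¹ * (γ * δ)) ω = ω := by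
    rw [← T_comp, ← T_comp, h, T_comp, inv_mul_cancel, T_one]
  have h3 : δ⁻¹ * (γ * δ) ≠ 1 := by
    intro h4
    apply hγ
    have : γ * δ = δ := by
      have := congrArg (δ * ·) h4
      simpa [← mul_assoc, mul_inv_cancel, mul_one] using this
    exact mul_right_cancel (by rw [this, one_mul])
  exact hω _ h3 h2

/-- action freeness: on `Fset`, `T γ ω` determines `γ`. -/
lemma T_free {γ δ : Gam D} {ω : Om D} (hω : ω ∈ Fset D) (h : T γ ω = T δ ω) : γ = δ := by
  have h2 : T (δ⁻¹ * γ) ω = ω := by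
    rw [← T_comp, h, T_comp, inv_mul_cancel, T_one]
  by_contra hne
  have h3 : δ⁻¹ * γ ≠ 1 := by
    intro h4
    apply hne
    have := congrArg (δ * ·) h4
    simpa [← mul_assoc, mul_inv_cancel, mul_one] using this
  exact hω _ h3 h2

/-! ### The graphing space -/

/-- the underlying space of the graphing -/
abbrev Jsp (D : ℕ) : Type := ↥(Fset D)

instance (D : ℕ) : StandardBorelSpace (Jsp D) :=
  (measurableSet_Fset D).standardBorel

/-- the measure of the graphing -/
noncomputable def muJ (D : ℕ) : Measure (Jsp D) :=
  (mu0 D).comap Subtype.val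

lemma measurableEmbedding_val (D : ℕ) :
    MeasurableEmbedding (Subtype.val : Jsp D → Om D) :=
  MeasurableEmbedding.subtype_coe (measurableSet_Fset D)

lemma muJ_apply {S : Set (Jsp D)} (hS : MeasurableSet S) :
    muJ D S = mu0 D (Subtype.val '' S) := by
  rw [muJ]
  exact (measurableEmbedding_val D).comap_apply (mu0 D) S

lemma muJ_prob (hD : 2 ≤ D) : IsProbabilityMeasure (muJ D) := by
  constructor
  rw [muJ_apply MeasurableSet.univ, Set.image_univ, Subtype.range_coe]
  exact mu0_Fset hD

/-- the graph maps on `J` -/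
def TJ (i : Fin D) (x : Jsp D) : Jsp D := ⟨T (a i) x.val, T_mem_Fset x.property⟩

lemma TJ_invol (i : Fin D) (x : Jsp D) : TJ i (TJ i x) = x := by
  apply Subtype.ext
  show T (a i) (T (a i) x.val) = x.val
  rw [T_comp, a_sq, T_one]

lemma measurable_TJ (i : Fin D) : Measurable (TJ (D := D) i) := by
  refine Measurable.subtype_mk ?_
  exact (measurable_T (a i)).comp measurable_subtype_coe

lemma muJ_TJ_preimage (hD : 2 ≤ D) (i : Fin D) {S : Set (Jsp D)} (hS : MeasurableSet S) :
    muJ D (TJ i ⁻¹' S) = muJ D S := by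
  have hSX : MeasurableSet (Subtype.val '' S) := (measurableEmbedding_val D).measurableSet_image' hS
  have him : Subtype.val '' (TJ i ⁻¹' S) = T (a i) ⁻¹' (Subtype.val '' S) ∩ Fset D := by
    ext ω
    constructor
    · rintro ⟨x, hx, rfl⟩
      exact ⟨⟨TJ i x, hx, rfl⟩, x.property⟩
    · rintro ⟨⟨y, hy, hyy⟩, hωF⟩
      refine ⟨⟨ω, hωF⟩, ?_, rfl⟩
      show TJ i ⟨ω, hωF⟩ ∈ S
      have : (TJ i ⟨ω, hωF⟩).val = y.val := by
        show T (a i) ω = y.val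
        rw [← hyy]
      rwa [Subtype.ext this]
    -- done
  have hsubF : T (a i) ⁻¹' (Subtype.val '' S) ⊆ Fset D := by
    intro ω hω
    obtain ⟨y, hy, hyy⟩ := hω
    -- T (a i) ω = y.val ∈ Fset, so ω = T (a i) y.val ∈ Fset
    have : ω = T (a i) y.val := by
      rw [hyy, T_comp, a_sq, T_one]
    rw [this]
    exact T_mem_Fset y.property
  rw [muJ_apply ((measurable_TJ i) hS), muJ_apply hS, him,
    Set.inter_eq_self_of_subset_left hsubF,
    (measurePreserving_T (a i)).measure_preimage hSX.nullMeasurableSet]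

/-! ### The edge relation -/

/-- the edge relation -/
def Erel (x y : Jsp D) : Prop := ∃ i : Fin D, y = TJ i x

lemma Erel_symm {x y : Jsp D} (h : Erel x y) : Erel y x := by
  obtain ⟨i, rfl⟩ := h
  exact ⟨i, (TJ_invol i x).symm⟩

lemma TJ_inj_index {i j : Fin D} {x : Jsp D} (h : TJ i x = TJ j x) : i = j := by
  have h2 : T (a i) x.val = T (a j) x.val := congrArg Subtype.val h
  exact a_injective (T_free x.property h2)

lemma measurableSet_Erel (D : ℕ) :
    MeasurableSet {p : Jsp D × Jsp D | Erel p.1 p.2} := by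
  have : {p : Jsp D × Jsp D | Erel p.1 p.2}
      = ⋃ i : Fin D, {p : Jsp D × Jsp D | (TJ i p.1).val = p.2.val} := by
    ext p
    simp only [Set.mem_setOf_eq, Set.mem_iUnion, Erel]
    constructor
    · rintro ⟨i, hh⟩; exact ⟨i, congrArg Subtype.val hh.symm⟩
    · rintro ⟨i, h⟩; exact ⟨i, Subtype.ext h.symm⟩
  rw [this]
  refine MeasurableSet.iUnion fun i => ?_
  exact measurableSet_eq_fun
    (((measurable_TJ i).comp measurable_fst).subtype_val)
    measurable_snd.subtype_val

lemma neighbors_eq (x : Jsp D) : {y : Jsp D | Erel x y} = Set.range (fun i => TJ i x) := by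
  ext y
  simp [Erel, eq_comm, Set.range]

lemma neighbors_finite (x : Jsp D) : {y : Jsp D | Erel x y}.Finite := by
  rw [neighbors_eq]
  exact Set.finite_range _

lemma neighbors_ncard (x : Jsp D) : ({y : Jsp D | Erel x y}).ncard = D := by
  rw [neighbors_eq, ← Set.image_univ,
    Set.ncard_image_of_injective _ (fun i j h => TJ_inj_index h), Set.ncard_univ,
    Nat.card_eq_fintype_card, Fintype.card_fin]

open Classical in
lemma degB_eq (x : Jsp D) (B : Set (Jsp D)) :
    (({y ∈ B | Erel x y}).ncard : ℝ) = ∑ i : Fin D, if TJ i x ∈ B then (1 : ℝ) else 0 := by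
  have h1 : {y ∈ B | Erel x y} = (fun i => TJ i x) '' {i | TJ i x ∈ B} := by
    ext y
    simp only [Set.mem_setOf_eq, Set.mem_image, Erel]
    constructor
    · rintro ⟨hyB, i, rfl⟩; exact ⟨i, hyB, rfl⟩
    · rintro ⟨i, hi, rfl⟩; exact ⟨hi, i, rfl⟩
  rw [h1, Set.ncard_image_of_injective _ (fun i j h => TJ_inj_index h),
    Set.ncard_eq_toFinset_card']
  have h2 : ({i | TJ i x ∈ B} : Set (Fin D)).toFinset = Finset.univ.filter (fun i => TJ i x ∈ B) := by
    ext i; simp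
  rw [h2, Finset.card_filter]
  push_cast
  rfl

lemma setIntegral_deg (hD : 2 ≤ D) (A B : Set (Jsp D)) (hA : MeasurableSet A)
    (hB : MeasurableSet B) :
    ∫ x in A, (({y ∈ B | Erel x y}).ncard : ℝ) ∂muJ D
      = ∑ i : Fin D, (muJ D (A ∩ TJ i ⁻¹' B)).toReal := by
  haveI := muJ_prob (D := D) hD
  classical
  have h1 : ∫ x in A, (({y ∈ B | Erel x y}).ncard : ℝ) ∂muJ D
      = ∫ x in A, (∑ i : Fin D, (TJ i ⁻¹' B).indicator (fun _ => (1:ℝ)) x) ∂muJ D := by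
    refine integral_congr_ae (Filter.Eventually.of_forall fun x => ?_)
    show (({y ∈ B | Erel x y}).ncard : ℝ) = _
    rw [degB_eq]
    refine Finset.sum_congr rfl fun i _ => ?_
    simp [Set.indicator_apply]
  rw [h1, integral_finset_sum]
  · refine Finset.sum_congr rfl fun i _ => ?_
    rw [setIntegral_indicator ((measurable_TJ i) hB)]
    simp [Measure.restrict_apply, Set.inter_comm, measureReal_def]
  · intro i _
    exact ((integrable_const (1:ℝ)).indicator ((measurable_TJ i) hB)).integrableOn

lemma mp_symm (hD : 2 ≤ D) (A B : Set (Jsp D)) (hA : MeasurableSet A)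
    (hB : MeasurableSet B) (i : Fin D) :
    muJ D (A ∩ TJ i ⁻¹' B) = muJ D (B ∩ TJ i ⁻¹' A) := by
  have h1 : A ∩ TJ i ⁻¹' B = TJ i ⁻¹' (B ∩ TJ i ⁻¹' A) := by
    ext x
    simp only [Set.mem_inter_iff, Set.mem_preimage, TJ_invol]
    exact and_comm
  rw [h1, muJ_TJ_preimage hD i (hB.inter ((measurable_TJ i) hA))]

lemma mp_main (hD : 2 ≤ D) (A B : Set (Jsp D)) (hA : MeasurableSet A) (hB : MeasurableSet B) :
    ∫ x in A, (({y ∈ B | Erel x y}).ncard : ℝ) ∂muJ D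
      = ∫ x in B, (({y ∈ A | Erel x y}).ncard : ℝ) ∂muJ D := by
  rw [setIntegral_deg hD A B hA hB, setIntegral_deg hD B A hB hA]
  exact Finset.sum_congr rfl fun i _ => by rw [mp_symm hD A B hA hB i]

/-! ### Forest property -/

lemma forest_main (D : ℕ) :
    Graphing.IsForestSet {p : Jsp D × Jsp D | Erel p.1 p.2} := by
  intro x y hxy hpath
  obtain ⟨i, hyi⟩ := hxy
  have hyi' : y = TJ i x := hyi
  subst hyi'
  set R : Jsp D → Jsp D → Prop := fun u v =>
    (u, v) ∈ {p : Jsp D × Jsp D | Erel p.1 p.2} ∧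
      ¬((u = x ∧ v = TJ i x) ∨ (u = TJ i x ∧ v = x)) with hR
  set P : Jsp D → Prop := fun u => ∃ l : List (Fin D),
    l.Chain' (· ≠ ·) ∧ u.val = T (pr l) x.val ∧ l.getLast? ≠ some i with hP
  have key : ∀ {u : Jsp D}, Relation.ReflTransGen R x u → P u := by
    intro u h
    induction h with
    | refl =>
      exact ⟨[], List.isChain_nil, by rw [pr_nil, T_one], by simp⟩
    | @tail b v hbc hstep ih =>
      obtain ⟨l, hc, hval, hlast⟩ := ih
      obtain ⟨hedge, hforb⟩ := hstep
      obtain ⟨j, hvj⟩ := hedge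
      have hvj' : v = TJ j b := hvj
      subst hvj'
      have hcval : (TJ j b).val = T (a j * pr l) x.val := by
        show T (a j) b.val = _
        rw [hval, T_comp]
      match l, hc, hval, hlast with
      | [], _, hval, _ =>
        have hbx : b = x := Subtype.ext (by rw [hval, pr_nil, T_one])
        have hji : j ≠ i := by
          rintro rfl
          exact hforb (Or.inl ⟨hbx, by rw [hbx]⟩)
        refine ⟨[j], List.isChain_singleton j, ?_, ?_⟩
        · rw [hcval, pr_nil, pr_cons, pr_nil]
        · simpa using hji
      | j' :: t, hc, hval, hlast =>
        by_cases hjj : j = j'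
        · subst hjj
          refine ⟨t, hc.tail, ?_, ?_⟩
          · rw [hcval, pr_cons, ← mul_assoc, a_sq, one_mul]
          · match t, hlast with
            | [], _ => simp
            | t0 :: t1, hlast => rwa [List.getLast?_cons_cons] at hlast
        · refine ⟨j :: j' :: t, ?_, ?_, ?_⟩
          · exact List.isChain_cons_cons.2 ⟨hjj, hc⟩
          · simp [hcval, pr_cons]
          · rwa [List.getLast?_cons_cons]
  obtain ⟨l, hc, hval, hlast⟩ := key hpath
  have : T (pr l) x.val = T (a i) x.val := by
    rw [← hval]; rfl
  have hl : l = [i] := pr_eq_a hc (T_free x.property this)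
  rw [hl] at hlast
  simp at hlast

/-! ### Infinite components -/

lemma compo_infinite {D : ℕ} (X : Set (Jsp D × Jsp D)) {i j : Fin D} (hij : i ≠ j)
    (hX : ∀ (u : Jsp D) (k : Fin D), k = i ∨ k = j → (u, TJ k u) ∈ X) (x : Jsp D) :
    (Graphing.compo X x).Infinite := by
  -- the alternating path
  let c : ℕ → Fin D := fun n => if Even n then i else j
  let z : ℕ → Jsp D := fun n => Nat.rec x (fun n u => TJ (c n) u) n
  have hz0 : z 0 = x := rfl
  have hzs : ∀ n, z (n + 1) = TJ (c n) (z n) := fun n => rfl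
  have hzval : ∀ n, (z n).val = T (pr (altl i j n)) x.val := by
    intro n
    induction n with
    | zero => simp only [hz0, altl, pr_nil, T_one]
    | succ n ih =>
      rw [hzs n]
      show T (a (c n)) (z n).val = _
      rw [ih, T_comp, altl, pr_cons]
  have hmem : ∀ n, z n ∈ Graphing.compo X x := by
    intro n
    induction n with
    | zero => exact Relation.ReflTransGen.refl
    | succ n ih =>
      refine Relation.ReflTransGen.tail ih ?_
      rw [hzs n]
      refine hX (z n) (c n) ?_
      by_cases h : Even n
      · exact Or.inl (by simp [c, h])
      · exact Or.inr (by simp [c, h])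
  have hinj : Function.Injective z := by
    intro n m h
    have h2 : T (pr (altl i j n)) x.val = T (pr (altl i j m)) x.val := by
      rw [← hzval, ← hzval, h]
    exact altl_injective hij (T_free x.property h2)
  exact Set.infinite_of_injective_forall_mem hinj hmem

lemma nat_card_compo {D : ℕ} {X : Set (Jsp D × Jsp D)} {x : Jsp D}
    (h : (Graphing.compo X x).Infinite) : Nat.card ↥(Graphing.compo X x) = 0 := by
  haveI := Set.infinite_coe_iff.2 h
  exact Nat.card_eq_zero_of_infinite

/-! ### Sub-edge-sets given by sets of colors -/

/-- the edge set spanned by the colors in `s` -/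
def Xs (s : Set (Fin D)) : Set (Jsp D × Jsp D) := {p | ∃ i ∈ s, p.2 = TJ i p.1}

lemma measurableSet_Xs (D : ℕ) (s : Set (Fin D)) : MeasurableSet (Xs (D := D) s) := by
  have : Xs (D := D) s
      = ⋃ i : Fin D, ⋃ (_ : i ∈ s), {p : Jsp D × Jsp D | (TJ i p.1).val = p.2.val} := by
    ext p
    simp only [Xs, Set.mem_setOf_eq, Set.mem_iUnion]
    constructor
    · rintro ⟨i, hi, hh⟩; exact ⟨i, hi, congrArg Subtype.val hh.symm⟩
    · rintro ⟨i, hi, h⟩; exact ⟨i, hi, Subtype.ext h.symm⟩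
  rw [this]
  refine MeasurableSet.iUnion fun i => MeasurableSet.iUnion fun _ => ?_
  exact measurableSet_eq_fun
    (((measurable_TJ i).comp measurable_fst).subtype_val)
    measurable_snd.subtype_val

lemma Xs_symm {s : Set (Fin D)} {x y : Jsp D} (h : (x, y) ∈ Xs s) : (y, x) ∈ Xs s := by
  obtain ⟨i, hi, hh⟩ := h
  have hh' : y = TJ i x := hh
  exact ⟨i, hi, by rw [hh', TJ_invol]⟩

lemma Xs_sub (s : Set (Fin D)) : Xs s ⊆ {p : Jsp D × Jsp D | Erel p.1 p.2} := by
  rintro p ⟨i, _, hh⟩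
  exact ⟨i, hh⟩

lemma Xs_union (s t : Set (Fin D)) : Xs s ∪ Xs t = Xs (s ∪ t) := by
  ext p
  simp only [Xs, Set.mem_union, Set.mem_setOf_eq]
  constructor
  · rintro (⟨i, hi, hh⟩ | ⟨i, hi, hh⟩)
    · exact ⟨i, Or.inl hi, hh⟩
    · exact ⟨i, Or.inr hi, hh⟩
  · rintro ⟨i, hi | hi, hh⟩
    · exact Or.inl ⟨i, hi, hh⟩
    · exact Or.inr ⟨i, hi, hh⟩

lemma Xs_univ (D : ℕ) : Xs (Set.univ : Set (Fin D)) = {p : Jsp D × Jsp D | Erel p.1 p.2} := by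
  ext p
  simp [Xs, Erel]

lemma Xs_disjoint {s t : Set (Fin D)} (h : s ∩ t = ∅) : Xs s ∩ Xs t = ∅ := by
  ext p
  simp only [Set.mem_inter_iff, Set.mem_empty_iff_false, iff_false, not_and]
  rintro ⟨i, hi, hhi⟩ ⟨j, hj, hhj⟩
  have : TJ i p.1 = TJ j p.1 := by rw [← hhi, ← hhj]
  have hij : i = j := TJ_inj_index this
  subst hij
  exact absurd (Set.mem_inter hi hj) (by rw [h]; exact Set.notMem_empty i)

lemma compo_Xs_infinite {s : Set (Fin D)} {i j : Fin D} (hi : i ∈ s) (hj : j ∈ s)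
    (hij : i ≠ j) (x : Jsp D) : (Graphing.compo (Xs s) x).Infinite := by
  refine compo_infinite (Xs s) hij ?_ x
  rintro u k (rfl | rfl)
  · exact ⟨k, hi, rfl⟩
  · exact ⟨k, hj, rfl⟩

lemma integral_inv_card_compo {X : Set (Jsp D × Jsp D)}
    (h : ∀ x : Jsp D, (Graphing.compo X x).Infinite) :
    ∫ x, (1 : ℝ) / (Nat.card ↥(Graphing.compo X x)) ∂(muJ D) = 0 := by
  have : ∀ x : Jsp D, (1 : ℝ) / (Nat.card ↥(Graphing.compo X x)) = 0 := by
    intro x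
    rw [nat_card_compo (h x)]
    simp
  rw [integral_congr_ae (Filter.Eventually.of_forall this), integral_zero]

end RhoNA

/-- For every `r ≥ 3` there is a graphing `G`, every component of which
is a `(2r−1)`-regular tree, and a Borel partition of its edge set into sets `U` and `W`
with `ρ(U) + ρ(W) ≥ 2 − 2/r > 1 = ρ(U ∪ W)`; hence the normalized rank of a graphing need
not be additive. -/
theorem Graphing.rho_not_additive (r : ℕ) (hr : 3 ≤ r) :
    ∃ (J : Type) (m : MeasurableSpace J) (_ : StandardBorelSpace J) (G : Graphing J)
      (U W : Set (J × J)),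
      G.IsForest ∧ (∀ x : J, ({y | G.E x y}).ncard = 2 * r - 1) ∧
      G.IsEdgeSubset U ∧ G.IsEdgeSubset W ∧ U ∪ W = G.edgeSet ∧ U ∩ W = ∅ ∧
      2 - 2 / (r : ℝ) ≤ G.rho U + G.rho W ∧ (1 : ℝ) < 2 - 2 / (r : ℝ) ∧
      G.rho (U ∪ W) = 1 := by
  classical
  set D := 2 * r - 1 with hD_def
  have hD : 2 ≤ D := by omega
  let G : Graphing (RhoNA.Jsp D) :=
    { E := RhoNA.Erel
      symm := fun x y h => RhoNA.Erel_symm h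
      measE := RhoNA.measurableSet_Erel D
      μ := RhoNA.muJ D
      prob := RhoNA.muJ_prob hD
      D := D
      degFin := RhoNA.neighbors_finite
      degBound := fun x => le_of_eq (RhoNA.neighbors_ncard x)
      mp := RhoNA.mp_main hD }
  let sU : Set (Fin D) := {i | i.val < r}
  let sW : Set (Fin D) := {i | r ≤ i.val}
  have hedge : G.edgeSet = {p : RhoNA.Jsp D × RhoNA.Jsp D | RhoNA.Erel p.1 p.2} := rfl
  -- distinguished colors
  have h0D : 0 < D := by omega
  have h1D : 1 < D := by omega
  have hrD : r < D := by omega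
  have hr1D : r + 1 < D := by omega
  have hU0 : (⟨0, h0D⟩ : Fin D) ∈ sU := by simpa [sU] using by omega
  have hU1 : (⟨1, h1D⟩ : Fin D) ∈ sU := by simpa [sU] using by omega
  have hU01 : (⟨0, h0D⟩ : Fin D) ≠ ⟨1, h1D⟩ := by
    intro h; simpa using congrArg Fin.val h
  have hWr : (⟨r, hrD⟩ : Fin D) ∈ sW := by simp [sW]
  have hWr1 : (⟨r + 1, hr1D⟩ : Fin D) ∈ sW := by simp [sW]
  have hWrr : (⟨r, hrD⟩ : Fin D) ≠ ⟨r + 1, hr1D⟩ := by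
    intro h; simpa using congrArg Fin.val h
  -- infinite components
  have hUinf : ∀ x, (Graphing.compo (RhoNA.Xs sU) x).Infinite :=
    fun x => RhoNA.compo_Xs_infinite hU0 hU1 hU01 x
  have hWinf : ∀ x, (Graphing.compo (RhoNA.Xs sW) x).Infinite :=
    fun x => RhoNA.compo_Xs_infinite hWr hWr1 hWrr x
  have hFinf : ∀ x, (Graphing.compo (RhoNA.Xs (Set.univ : Set (Fin D))) x).Infinite :=
    fun x => RhoNA.compo_Xs_infinite (Set.mem_univ _) (Set.mem_univ _) hU01 x
  have hUW : sU ∪ sW = Set.univ := by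
    ext i; simp only [Set.mem_union, Set.mem_univ, iff_true, sU, sW, Set.mem_setOf_eq]; omega
  have hUWd : sU ∩ sW = ∅ := by
    ext i; simp only [Set.mem_inter_iff, Set.mem_empty_iff_false, iff_false, not_and, sU, sW,
      Set.mem_setOf_eq]; omega
  have hrho : ∀ (X : Set (RhoNA.Jsp D × RhoNA.Jsp D)),
      (∀ x, (Graphing.compo X x).Infinite) → G.rho X = 1 := by
    intro X hX
    show (1 : ℝ) - ∫ x, (1 : ℝ) / (Nat.card ↥(Graphing.compo X x)) ∂(RhoNA.muJ D) = 1
    rw [RhoNA.integral_inv_card_compo hX, sub_zero]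
  have hr3 : (3 : ℝ) ≤ (r : ℝ) := by exact_mod_cast hr
  have hrpos : (0 : ℝ) < (r : ℝ) := by linarith
  have hlt : (1 : ℝ) < 2 - 2 / (r : ℝ) := by
    rw [lt_sub_iff_add_lt]
    have : 2 / (r : ℝ) < 1 := by
      rw [div_lt_one hrpos]; linarith
    linarith
  refine ⟨RhoNA.Jsp D, inferInstance, inferInstance, G, RhoNA.Xs sU, RhoNA.Xs sW,
    ?_, ?_, ?_, ?_, ?_, ?_, ?_, hlt, ?_⟩
  · exact RhoNA.forest_main D
  · intro x
    exact RhoNA.neighbors_ncard x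
  · exact ⟨RhoNA.measurableSet_Xs D sU, fun x y h => RhoNA.Xs_symm h,
      by rw [hedge]; exact RhoNA.Xs_sub sU⟩
  · exact ⟨RhoNA.measurableSet_Xs D sW, fun x y h => RhoNA.Xs_symm h,
      by rw [hedge]; exact RhoNA.Xs_sub sW⟩
  · rw [RhoNA.Xs_union, hUW, hedge, RhoNA.Xs_univ]
  · exact RhoNA.Xs_disjoint hUWd
  · rw [hrho _ hUinf, hrho _ hWinf]
    linarith [div_pos (by norm_num : (0:ℝ) < 2) hrpos]
  · rw [RhoNA.Xs_union, hUW, hrho _ hFinf]
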